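/- Let C and M be monoidal categories, Φ : C ⥤ M a strong monoidal functor, and adj : Φ ⊣ Tr an adjunction with unit η and counit ε, with μ the induced multiplication on Tr. If an object c of C has a left dual, then for every object x of M the morphism (id_{Tr(x)} ⊗ η_c) ≫ μ_{x, Φ(c)} : Tr(x) ⊗ c ⟶ Tr(x ⊗ Φ(c)) is an isomorphism. In particular, this holds for every c when C is rigid. -/

import Mathlib

open CategoryTheory MonoidalCategory

/-- Given a strong monoidal functor `Φ : C ⥤ M` and an adjunction `Φ ⊣ Tr` with counit `ε`,
the induced multiplication `μ_{x,y} : Tr x ⊗ Tr y ⟶ Tr (x ⊗ y)`: the transpose under the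
adjunction of `Φ(Tr x ⊗ Tr y) ≅ Φ(Tr x) ⊗ Φ(Tr y) ⟶ x ⊗ y`, where the first map is the
inverse of the monoidal structure isomorphism of `Φ` and the second is `ε_x ⊗ ε_y`. -/
noncomputable def traceMul {C M : Type*} [Category C] [Category M]
    [MonoidalCategory C] [MonoidalCategory M]
    (Φ : C ⥤ M) [Φ.Monoidal] {Tr : M ⥤ C} (adj : Φ ⊣ Tr) (x y : M) :
    Tr.obj x ⊗ Tr.obj y ⟶ Tr.obj (x ⊗ y) :=
  (adj.homEquiv _ _)
    (inv (Functor.LaxMonoidal.μ Φ (Tr.obj x) (Tr.obj y)) ≫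
      (adj.counit.app x ⊗ₘ adj.counit.app y))

namespace TraceMulAux

open Functor.LaxMonoidal Functor.OplaxMonoidal Category

variable {C M : Type*} [Category C] [Category M]
    [MonoidalCategory C] [MonoidalCategory M]
    (Φ : C ⥤ M) [Φ.Monoidal]

lemma whiskerLeft_lax_ε (X : C) :
    Φ.obj X ◁ ε Φ = (ρ_ (Φ.obj X)).hom ≫ Φ.map (ρ_ X).inv ≫ δ Φ X (𝟙_ C) := by
  rw [← Category.id_comp (Φ.obj X ◁ ε Φ), ← Iso.hom_inv_id (ρ_ (Φ.obj X)), assoc,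
    Functor.OplaxMonoidal.right_unitality (F := Φ) X]
  simp [Functor.Monoidal.whiskerLeft_η_ε]

lemma lax_ε_whiskerRight (X : C) :
    ε Φ ▷ Φ.obj X = (λ_ (Φ.obj X)).hom ≫ Φ.map (λ_ X).inv ≫ δ Φ (𝟙_ C) X := by
  rw [← Category.id_comp (ε Φ ▷ Φ.obj X), ← Iso.hom_inv_id (λ_ (Φ.obj X)), assoc,
    Functor.OplaxMonoidal.left_unitality (F := Φ) X]
  simp [Functor.Monoidal.whiskerRight_η_ε]

/-- A strong monoidal functor sends exact pairings to exact pairings. -/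
noncomputable def mapExactPairing (X Y : C) [ExactPairing X Y] :
    ExactPairing (Φ.obj X) (Φ.obj Y) where
  coevaluation' := ε Φ ≫ Φ.map (η_ X Y) ≫ δ Φ X Y
  evaluation' := μ Φ Y X ≫ Φ.map (ε_ X Y) ≫ η Φ
  coevaluation_evaluation' := by
    simp only [MonoidalCategory.whiskerLeft_comp, comp_whiskerRight, assoc,
      whiskerLeft_lax_ε]
    rw [δ_natural_right_assoc]
    rw [Functor.OplaxMonoidal.associativity_inv_assoc]
    rw [Functor.Monoidal.whiskerRight_δ_μ_assoc, δ_natural_left_assoc]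
    rw [Iso.eq_comp_inv]
    simp only [assoc, Functor.OplaxMonoidal.left_unitality_hom]
    simp only [← Φ.map_comp_assoc, ← Φ.map_comp]
    simp
  evaluation_coevaluation' := by
    simp only [MonoidalCategory.whiskerLeft_comp, comp_whiskerRight, assoc,
      lax_ε_whiskerRight]
    rw [δ_natural_left_assoc]
    rw [Functor.OplaxMonoidal.associativity_assoc]
    rw [Functor.Monoidal.whiskerLeft_δ_μ_assoc, δ_natural_right_assoc]
    rw [Iso.eq_comp_inv]
    simp only [assoc, Functor.OplaxMonoidal.right_unitality_hom]
    simp only [← Φ.map_comp_assoc, ← Φ.map_comp]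
    simp

variable (c : C) [HasLeftDual c]

lemma key (t : C) (x : M) (p : Φ.obj t ⟶ x) :
    (δ Φ t c ≫ (p ▷ Φ.obj c)) ▷ Φ.obj (ᘁc) ≫ (α_ x (Φ.obj c) (Φ.obj (ᘁc))).hom ≫
      x ◁ (μ Φ c (ᘁc) ≫ Φ.map (ε_ (ᘁc) c) ≫ η Φ) ≫ (ρ_ x).hom
    = μ Φ (t ⊗ c) (ᘁc) ≫
        Φ.map ((α_ t c (ᘁc)).hom ≫ t ◁ ε_ (ᘁc) c ≫ (ρ_ t).hom) ≫ p := by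
  have assoc3 : δ Φ t c ▷ Φ.obj (ᘁc) ≫ (α_ (Φ.obj t) (Φ.obj c) (Φ.obj (ᘁc))).hom ≫
      Φ.obj t ◁ μ Φ c (ᘁc) =
      μ Φ (t ⊗ c) (ᘁc) ≫ Φ.map (α_ t c (ᘁc)).hom ≫ δ Φ t (c ⊗ ᘁc) := by
    rw [← cancel_epi (μ Φ t c ▷ Φ.obj (ᘁc)), Functor.Monoidal.whiskerRight_μ_δ_assoc,
      Functor.LaxMonoidal.associativity_assoc]
    simp
  calc (δ Φ t c ≫ (p ▷ Φ.obj c)) ▷ Φ.obj (ᘁc) ≫ (α_ x (Φ.obj c) (Φ.obj (ᘁc))).hom ≫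
      x ◁ (μ Φ c (ᘁc) ≫ Φ.map (ε_ (ᘁc) c) ≫ η Φ) ≫ (ρ_ x).hom
      = δ Φ t c ▷ Φ.obj (ᘁc) ≫ (α_ (Φ.obj t) (Φ.obj c) (Φ.obj (ᘁc))).hom ≫
          Φ.obj t ◁ (μ Φ c (ᘁc) ≫ Φ.map (ε_ (ᘁc) c) ≫ η Φ) ≫ (ρ_ (Φ.obj t)).hom ≫ p := by
        simp only [comp_whiskerRight, assoc, associator_naturality_left_assoc]
        rw [← whisker_exchange_assoc]
        simp [← whisker_exchange]
    _ = μ Φ (t ⊗ c) (ᘁc) ≫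
        Φ.map ((α_ t c (ᘁc)).hom ≫ t ◁ ε_ (ᘁc) c ≫ (ρ_ t).hom) ≫ p := by
        simp only [MonoidalCategory.whiskerLeft_comp, assoc]
        rw [reassoc_of% assoc3, δ_natural_right_assoc,
          Functor.OplaxMonoidal.right_unitality_hom_assoc]
        simp

end TraceMulAux

/-- If `c` has a left dual (for instance if `C` is rigid), then for every `x` the canonical
morphism `(id_{Tr x} ⊗ η_c) ≫ μ_{x, Φ c} : Tr x ⊗ c ⟶ Tr (x ⊗ Φ c)` is an isomorphism. -/
theorem isIso_traceMul_of_hasLeftDual {C M : Type*} [Category C] [Category M]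
    [MonoidalCategory C] [MonoidalCategory M]
    (Φ : C ⥤ M) [Φ.Monoidal] {Tr : M ⥤ C} (adj : Φ ⊣ Tr) (x : M) (c : C) [HasLeftDual c] :
    IsIso ((𝟙 (Tr.obj x) ⊗ₘ adj.unit.app c) ≫ traceMul Φ adj x (Φ.obj c)) := by
  open Functor.LaxMonoidal Functor.OplaxMonoidal Category in
  letI : ExactPairing (Φ.obj (ᘁc)) (Φ.obj c) := TraceMulAux.mapExactPairing Φ (ᘁc) c
  let A1 : (tensorRight (ᘁc : C) ⋙ Φ) ⊣ (Tr ⋙ tensorRight c) :=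
    (tensorRightAdjunction (ᘁc : C) c).comp adj
  let A2 : (Φ ⋙ tensorRight (Φ.obj (ᘁc))) ⊣ (tensorRight (Φ.obj c) ⋙ Tr) :=
    adj.comp (tensorRightAdjunction (Φ.obj (ᘁc)) (Φ.obj c))
  let β : (Φ ⋙ tensorRight (Φ.obj (ᘁc))) ⟶ (tensorRight (ᘁc : C) ⋙ Φ) :=
    { app := fun a => μ Φ a (ᘁc)
      naturality := by intro a b f; simp }
  haveI : IsIso β := by
    have : ∀ (a : C), IsIso (β.app a) := fun a => by
      dsimp [β]; infer_instance
    apply NatIso.isIso_of_isIso_app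
  have hg : Φ.map ((𝟙 (Tr.obj x) ⊗ₘ adj.unit.app c) ≫ traceMul Φ adj x (Φ.obj c)) ≫
      adj.counit.app (x ⊗ Φ.obj c) =
      δ Φ (Tr.obj x) c ≫ (adj.counit.app x ▷ Φ.obj c) := by
    have hδ : inv (μ Φ (Tr.obj x) (Tr.obj (Φ.obj c))) = δ Φ _ _ := by
      apply IsIso.inv_eq_of_hom_inv_id; simp
    rw [Φ.map_comp, assoc]
    have h2 : Φ.map (traceMul Φ adj x (Φ.obj c)) ≫ adj.counit.app (x ⊗ Φ.obj c) =
        inv (μ Φ (Tr.obj x) (Tr.obj (Φ.obj c))) ≫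
          (adj.counit.app x ⊗ₘ adj.counit.app (Φ.obj c)) :=
      (adj.homEquiv _ _).left_inv _
    rw [h2, hδ]
    simp only [← Functor.comp_obj Φ Tr]
    rw [id_tensorHom, ← Functor.OplaxMonoidal.δ_natural_right_assoc]
    simp only [Functor.id_obj, Functor.comp_obj]
    rw [cancel_epi, MonoidalCategory.tensorHom_def, whisker_exchange_assoc,
      ← MonoidalCategory.whiskerLeft_comp]
    simp
  have h : (𝟙 (Tr.obj x) ⊗ₘ adj.unit.app c) ≫ traceMul Φ adj x (Φ.obj c) =
      (conjugateEquiv A1 A2 β).app x := by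
    apply (A2.homEquiv _ _).symm.injective
    rw [Adjunction.homEquiv_counit, Adjunction.homEquiv_counit, conjugateEquiv_counit]
    simp only [A1, A2, Adjunction.comp_counit_app, tensorRightAdjunction,
      Adjunction.mkOfHomEquiv_counit_app]
    dsimp [A1, A2, β, Adjunction.comp_counit_app, tensorRightAdjunction, Adjunction.mkOfHomEquiv,
      tensorRightHomEquiv]
    simp only [id_comp, comp_id, MonoidalCategory.id_whiskerRight, Category.assoc]
    rw [← comp_whiskerRight_assoc, hg]
    have hev : (ε_ (Φ.obj (ᘁc)) (Φ.obj c)) =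
        μ Φ c (ᘁc) ≫ Φ.map (ε_ (ᘁc) c) ≫ η Φ := rfl
    rw [hev]
    have := TraceMulAux.key Φ c (Tr.obj x) x (adj.counit.app x)
    simpa using this
  rw [h]
  infer_instance
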